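/- Let (U, 𝒮) be a SetCover instance with finite universe U, let U' = U ⊔ U, 𝒮' = 𝒮 ∪ { {u, u'} : u ∈ U }, and let D = { u' : u ∈ U } be the set of all duplicates. If OPT(U, 𝒮) < |U|, then OPT(U', 𝒮' ∪ {D}) = OPT(U, 𝒮) + 1. -/

import Mathlib

open Finset

variable {α : Type*} [DecidableEq α]

/-- `C` is a cover of the set-cover instance with universe `U` and set family `F`:
it is a subfamily of `F` whose union is `U`. -/
def IsCover {β : Type*} [DecidableEq β] (U : Finset β) (F : Finset (Finset β))
    (C : Finset (Finset β)) : Prop :=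
  C ⊆ F ∧ C.sup id = U

/-- `coverOPT U F` is the minimum cardinality of a cover of the instance `(U, F)`. -/
noncomputable def coverOPT {β : Type*} [DecidableEq β] (U : Finset β)
    (F : Finset (Finset β)) : ℕ :=
  sInf {n | ∃ C, IsCover U F C ∧ C.card = n}

/-- The duplicated universe `U' = U ⊔ U`: the original elements (`Sum.inl`)
together with a fresh copy (`Sum.inr`) of each element. -/
def dupUniv (U : Finset α) : Finset (α ⊕ α) := U.image Sum.inl ∪ U.image Sum.inr

/-- The original family `𝒮`, viewed inside the duplicated universe. -/
def liftSets (F : Finset (Finset α)) : Finset (Finset (α ⊕ α)) :=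
  F.image fun s => s.image Sum.inl

/-- The family of pair sets `{u, u'}` for `u ∈ U`. -/
def pairSets (U : Finset α) : Finset (Finset (α ⊕ α)) :=
  U.image fun u => ({Sum.inl u, Sum.inr u} : Finset (α ⊕ α))

/-- The set `D = {u' : u ∈ U}` of all duplicates. -/
def dupSet (U : Finset α) : Finset (α ⊕ α) := U.image Sum.inr

/-- If `OPT(U, 𝒮) < |U|`, then `OPT(U', 𝒮' ∪ {D}) = OPT(U, 𝒮) + 1`. -/
theorem stmt1 (U : Finset α) (F : Finset (Finset α)) (hF : F.sup id = U)
    (hlt : coverOPT U F < U.card) :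
    coverOPT (dupUniv U) (insert (dupSet U) (liftSets F ∪ pairSets U)) =
      coverOPT U F + 1 := by
  classical
  have hexists : ∀ u ∈ U, ∃ t ∈ F, u ∈ t := by
    intro u hu
    rw [← hF] at hu
    exact Finset.mem_sup.mp hu
  set f : α → Finset α := fun u => if h : ∃ t ∈ F, u ∈ t then h.choose else ∅ with hfdef
  have hf1 : ∀ u ∈ U, f u ∈ F ∧ u ∈ f u := by
    intro u hu
    have h := hexists u hu
    simp only [hfdef, dif_pos h]
    exact ⟨h.choose_spec.1, h.choose_spec.2⟩
  have hsubU : ∀ s ∈ F, s ⊆ U := by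
    intro s hs u hu
    rw [← hF]
    exact Finset.mem_sup.mpr ⟨s, hs, hu⟩
  have hne : {n | ∃ C, IsCover U F C ∧ C.card = n}.Nonempty :=
    ⟨F.card, F, ⟨Finset.Subset.refl F, hF⟩, rfl⟩
  obtain ⟨C₀, hC₀, hC₀card⟩ := Nat.sInf_mem hne
  -- the full primed family is a cover of dupUniv
  have hfull : (insert (dupSet U) (liftSets F ∪ pairSets U)).sup id = dupUniv U := by
    apply Finset.Subset.antisymm
    · intro x hx
      obtain ⟨s, hs, hxs⟩ := Finset.mem_sup.mp hx
      rw [Finset.mem_insert] at hs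
      rcases hs with rfl | hs
      · obtain ⟨a, ha, rfl⟩ := Finset.mem_image.mp hxs
        exact Finset.mem_union_right _ (Finset.mem_image_of_mem _ ha)
      rw [Finset.mem_union] at hs
      rcases hs with hs | hs
      · obtain ⟨t, htF, rfl⟩ := Finset.mem_image.mp hs
        obtain ⟨a, ha, rfl⟩ := Finset.mem_image.mp hxs
        exact Finset.mem_union_left _ (Finset.mem_image_of_mem _ (hsubU t htF ha))
      · obtain ⟨v, hv, rfl⟩ := Finset.mem_image.mp hs
        simp only [id_eq] at hxs
        rw [Finset.mem_insert, Finset.mem_singleton] at hxs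
        rcases hxs with rfl | rfl
        · exact Finset.mem_union_left _ (Finset.mem_image_of_mem _ hv)
        · exact Finset.mem_union_right _ (Finset.mem_image_of_mem _ hv)
    · intro x hx
      rw [dupUniv, Finset.mem_union] at hx
      rcases hx with hx | hx
      · obtain ⟨a, ha, rfl⟩ := Finset.mem_image.mp hx
        refine Finset.mem_sup.mpr ⟨{Sum.inl a, Sum.inr a}, ?_, by simp⟩
        exact Finset.mem_insert_of_mem
          (Finset.mem_union_right _ (Finset.mem_image_of_mem _ ha))
      · obtain ⟨a, ha, rfl⟩ := Finset.mem_image.mp hx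
        refine Finset.mem_sup.mpr ⟨dupSet U, Finset.mem_insert_self _ _, ?_⟩
        exact Finset.mem_image_of_mem _ ha
  -- upper bound
  have hub : coverOPT (dupUniv U) (insert (dupSet U) (liftSets F ∪ pairSets U)) ≤
      coverOPT U F + 1 := by
    set C' : Finset (Finset (α ⊕ α)) :=
      insert (dupSet U) (C₀.image fun s => s.image Sum.inl) with hC'def
    have hcov : IsCover (dupUniv U) (insert (dupSet U) (liftSets F ∪ pairSets U)) C' := by
      constructor
      · intro s hs
        rw [hC'def, Finset.mem_insert] at hs
        rcases hs with rfl | h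
        · exact Finset.mem_insert_self _ _
        · refine Finset.mem_insert_of_mem (Finset.mem_union_left _ ?_)
          obtain ⟨t, ht, rfl⟩ := Finset.mem_image.mp h
          exact Finset.mem_image_of_mem _ (hC₀.1 ht)
      · apply Finset.Subset.antisymm
        · intro x hx
          obtain ⟨s, hs, hxs⟩ := Finset.mem_sup.mp hx
          have : s ∈ insert (dupSet U) (liftSets F ∪ pairSets U) := by
            rw [hC'def, Finset.mem_insert] at hs
            rcases hs with rfl | h
            · exact Finset.mem_insert_self _ _
            · obtain ⟨t, ht, rfl⟩ := Finset.mem_image.mp h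
              exact Finset.mem_insert_of_mem (Finset.mem_union_left _
                (Finset.mem_image_of_mem _ (hC₀.1 ht)))
          rw [← hfull]
          exact Finset.mem_sup.mpr ⟨s, this, hxs⟩
        · intro x hx
          rw [dupUniv, Finset.mem_union] at hx
          rcases hx with hx | hx
          · obtain ⟨a, ha, rfl⟩ := Finset.mem_image.mp hx
            have : a ∈ C₀.sup id := hC₀.2 ▸ ha
            obtain ⟨t, ht, hat⟩ := Finset.mem_sup.mp this
            refine Finset.mem_sup.mpr ⟨t.image Sum.inl, ?_, Finset.mem_image_of_mem _ hat⟩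
            exact Finset.mem_insert_of_mem (Finset.mem_image_of_mem _ ht)
          · obtain ⟨a, ha, rfl⟩ := Finset.mem_image.mp hx
            exact Finset.mem_sup.mpr ⟨dupSet U, Finset.mem_insert_self _ _,
              Finset.mem_image_of_mem _ ha⟩
    have hcard : C'.card ≤ coverOPT U F + 1 := by
      have h1 : C'.card ≤ (C₀.image fun s => s.image (Sum.inl : α → α ⊕ α)).card + 1 := by
        rw [hC'def]
        exact Finset.card_insert_le (dupSet U) (C₀.image fun s => s.image Sum.inl)
      have h2 : (C₀.image fun s => s.image (Sum.inl : α → α ⊕ α)).card ≤ C₀.card :=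
        Finset.card_image_le
      have h3 : coverOPT U F = C₀.card := by rw [coverOPT, ← hC₀card]
      omega
    exact le_trans (Nat.sInf_le ⟨C', hcov, rfl⟩) hcard
  -- lower bound
  have hlb : coverOPT U F + 1 ≤
      coverOPT (dupUniv U) (insert (dupSet U) (liftSets F ∪ pairSets U)) := by
    apply le_csInf
    · exact ⟨(insert (dupSet U) (liftSets F ∪ pairSets U)).card,
        insert (dupSet U) (liftSets F ∪ pairSets U), ⟨Finset.Subset.refl _, hfull⟩, rfl⟩
    · rintro n ⟨C', ⟨hsub, hcov⟩, rfl⟩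
      by_cases hD : dupSet U ∈ C'
      · set h : Finset (α ⊕ α) → Finset α := fun s' =>
          let p := s'.preimage (Sum.inl : α → α ⊕ α) Sum.inl_injective.injOn
          if p ∈ F then p else p.sup f with hhdef
        have hp_lift : ∀ s : Finset α, (s.image Sum.inl).preimage (Sum.inl : α → α ⊕ α)
            Sum.inl_injective.injOn = s := by
          intro s
          ext a
          simp [Finset.mem_preimage]
        have key : ∀ s' ∈ C'.erase (dupSet U),
            h s' ∈ F ∧ ∀ u, Sum.inl u ∈ s' → u ∈ U → u ∈ h s' := by
          intro s' hs'
          have hs'mem : s' ∈ insert (dupSet U) (liftSets F ∪ pairSets U) :=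
            hsub (Finset.mem_of_mem_erase hs')
          have hs'ne : s' ≠ dupSet U := Finset.ne_of_mem_erase hs'
          rw [Finset.mem_insert] at hs'mem
          rcases hs'mem with h1 | h1
          · exact absurd h1 hs'ne
          rw [Finset.mem_union] at h1
          rcases h1 with h1 | h1
          · obtain ⟨s, hsF, rfl⟩ := Finset.mem_image.mp h1
            have hps := hp_lift s
            refine ⟨?_, ?_⟩
            · simp only [hhdef]
              rw [hps]
              simp [hsF]
            · intro u hu _
              simp only [hhdef]
              rw [hps]
              have : u ∈ s := by
                obtain ⟨a, ha, hae⟩ := Finset.mem_image.mp hu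
                cases hae
                exact ha
              simp [hsF, this]
          · obtain ⟨v, hvU, rfl⟩ := Finset.mem_image.mp h1
            have hpv : ({Sum.inl v, Sum.inr v} : Finset (α ⊕ α)).preimage (Sum.inl : α → α ⊕ α)
                Sum.inl_injective.injOn = {v} := by
              ext a
              simp [Finset.mem_preimage]
            refine ⟨?_, ?_⟩
            · simp only [hhdef]
              rw [hpv]
              by_cases hvF : ({v} : Finset α) ∈ F
              · simp [hvF]
              · simp [hvF, (hf1 v hvU).1]
            · intro u hu huU
              have huv : u = v := by
                rw [Finset.mem_insert, Finset.mem_singleton] at hu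
                rcases hu with h2 | h2
                · exact Sum.inl.inj h2
                · exact absurd h2 (by simp)
              subst huv
              simp only [hhdef]
              rw [hpv]
              by_cases hvF : ({u} : Finset α) ∈ F
              · simp [hvF]
              · simp only [hvF, if_false]
                simp [(hf1 u huU).2]
        have hcovU : IsCover U F ((C'.erase (dupSet U)).image h) := by
          constructor
          · intro s hs
            obtain ⟨s', hs', rfl⟩ := Finset.mem_image.mp hs
            exact (key s' hs').1
          · apply Finset.Subset.antisymm
            · intro u hu
              obtain ⟨s, hs, hus⟩ := Finset.mem_sup.mp hu
              obtain ⟨s', hs', rfl⟩ := Finset.mem_image.mp hs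
              exact hsubU _ (key s' hs').1 hus
            · intro u hu
              have hx : Sum.inl u ∈ dupUniv U :=
                Finset.mem_union_left _ (Finset.mem_image_of_mem _ hu)
              rw [← hcov] at hx
              obtain ⟨s', hs', hus'⟩ := Finset.mem_sup.mp hx
              have hs'ne : s' ≠ dupSet U := by
                rintro rfl
                rw [dupSet] at hus'
                obtain ⟨a, _, hae⟩ := Finset.mem_image.mp hus'
                exact absurd hae (by simp)
              have hs'e : s' ∈ C'.erase (dupSet U) := Finset.mem_erase.mpr ⟨hs'ne, hs'⟩
              exact Finset.mem_sup.mpr ⟨h s', Finset.mem_image_of_mem _ hs'e,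
                (key s' hs'e).2 u hus' hu⟩
        have hcard : ((C'.erase (dupSet U)).image h).card ≤ C'.card - 1 := by
          have h1 : ((C'.erase (dupSet U)).image h).card ≤ (C'.erase (dupSet U)).card :=
            Finset.card_image_le
          have h2 : (C'.erase (dupSet U)).card = C'.card - 1 :=
            Finset.card_erase_of_mem hD
          omega
        have h1 : coverOPT U F ≤ C'.card - 1 :=
          le_trans (Nat.sInf_le ⟨_, hcovU, rfl⟩) hcard
        have h2 : 1 ≤ C'.card := Finset.card_pos.mpr ⟨_, hD⟩
        omega
      · have hpairs : pairSets U ⊆ C' := by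
          intro p hp
          obtain ⟨u, huU, rfl⟩ := Finset.mem_image.mp hp
          have hx : Sum.inr u ∈ dupUniv U :=
            Finset.mem_union_right _ (Finset.mem_image_of_mem _ huU)
          rw [← hcov] at hx
          obtain ⟨s', hs', hus'⟩ := Finset.mem_sup.mp hx
          have hs'mem := hsub hs'
          rw [Finset.mem_insert] at hs'mem
          rcases hs'mem with rfl | h1
          · exact absurd hs' hD
          rw [Finset.mem_union] at h1
          rcases h1 with h1 | h1
          · obtain ⟨s, _, rfl⟩ := Finset.mem_image.mp h1
            obtain ⟨a, _, hae⟩ := Finset.mem_image.mp hus'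
            exact absurd hae (by simp)
          · obtain ⟨v, hvU, rfl⟩ := Finset.mem_image.mp h1
            have : u = v := by
              simp only [id_eq] at hus'
              rw [Finset.mem_insert, Finset.mem_singleton] at hus'
              rcases hus' with h2 | h2
              · exact absurd h2 (by simp)
              · exact Sum.inr.inj h2
            subst this
            exact hs'
        have hcardpairs : (pairSets U).card = U.card := by
          rw [pairSets]
          apply Finset.card_image_of_injOn
          intro u _ v _ huv
          simp only at huv
          have : Sum.inl u ∈ ({Sum.inl v, Sum.inr v} : Finset (α ⊕ α)) := by
            rw [← huv]; simp
          rw [Finset.mem_insert, Finset.mem_singleton] at this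
          rcases this with h2 | h2
          · exact Sum.inl.inj h2
          · exact absurd h2 (by simp)
        have : U.card ≤ C'.card := hcardpairs ▸ Finset.card_le_card hpairs
        omega
  omega
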